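/- Given an A-derivation D : R → M and a monoid homomorphism δ : (Γ,·) → (M,+), the map D̃ : F(Γ,R) → F(Γ,M) defined by D̃(α)(n) = D(α(n)) + α(n)δ(n) is an A-derivation, i.e., it is A-linear and satisfies D̃(α·β) = D̃(α)·β + α·D̃(β) with respect to Dirichlet convolution. -/

import Mathlib

/-- Type synonym: functions from `Γ` to `R` (to carry the Dirichlet-convolution
ring structure, distinct from the pointwise one). -/
def DirF (Γ R : Type*) : Type _ := Γ → R

/-- `Γ` is a monoid of finite type: every element has finitely many factorizations. -/
def FiniteMulType (Γ : Type*) [Mul Γ] : Prop :=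
  ∀ n : Γ, {p : Γ × Γ | p.1 * p.2 = n}.Finite

/-- Dirichlet convolution. -/
noncomputable def dconv {Γ R : Type*} [Mul Γ] [NonUnitalNonAssocSemiring R]
    (α β : DirF Γ R) : DirF Γ R :=
  fun n => ∑ᶠ p ∈ {p : Γ × Γ | p.1 * p.2 = n}, α p.1 * β p.2

/-- A ring structure on `DirF Γ R` is *the* Dirichlet convolution ring structure if addition is
pointwise, multiplication is Dirichlet convolution, and the unity is `e` (`e 1 = 1`, `e n = 0`
for `n ≠ 1`). -/
def IsDirichletRing {Γ R : Type*} [Monoid Γ] [Ring R] (inst : Ring (DirF Γ R)) : Prop := by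
  letI := inst
  exact (∀ α β : DirF Γ R, ∀ n : Γ, (α + β) n = α n + β n) ∧
    (∀ α β : DirF Γ R, α * β = dconv α β) ∧
    ((1 : DirF Γ R) 1 = 1 ∧ ∀ n : Γ, n ≠ 1 → (1 : DirF Γ R) n = 0)

/-- Dirichlet convolution action of `F(Γ,R)` on `F(Γ,M)`. -/
noncomputable def dsmul {Γ R M : Type*} [Mul Γ] [Semiring R] [AddCommMonoid M] [Module R M]
    (α : DirF Γ R) (f : DirF Γ M) : DirF Γ M :=
  fun n => ∑ᶠ p ∈ {p : Γ × Γ | p.1 * p.2 = n}, α p.1 • f p.2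

/-- Given an `A`-derivation `D : R → M` and a monoid morphism `δ : (Γ,·) → (M,+)`, the map
`D̃(α)(n) = D(α(n)) + α(n)·δ(n)` is an `A`-derivation `F(Γ,R) → F(Γ,M)`: it is additive,
`A`-linear, and satisfies the Leibniz rule w.r.t. Dirichlet convolution. -/
theorem stmt7 {A R M Γ : Type*} [CommRing A] [CommRing R] [Algebra A R]
    [AddCommGroup M] [Module R M] [Module A M] [IsScalarTower A R M]
    [CommMonoid Γ] (hfin : FiniteMulType Γ)
    (D : R → M)
    (hDadd : ∀ r s : R, D (r + s) = D r + D s)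
    (hDlin : ∀ (a : A) (r : R), D (a • r) = a • D r)
    (hDleib : ∀ r s : R, D (r * s) = r • D s + s • D r)
    (δ : Γ → M) (hδ1 : δ 1 = 0) (hδmul : ∀ a b : Γ, δ (a * b) = δ a + δ b) :
    ∀ Dt : DirF Γ R → DirF Γ M,
      (Dt = fun α => fun n => D (α n) + α n • δ n) →
      (∀ α β : DirF Γ R, Dt (fun n => α n + β n) = fun n => Dt α n + Dt β n) ∧
      (∀ (a : A) (α : DirF Γ R), Dt (fun n => a • α n) = fun n => a • Dt α n) ∧
      (∀ α β : DirF Γ R,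
        Dt (dconv α β) = fun n => dsmul α (Dt β) n + dsmul β (Dt α) n) := by
  intro Dt hDt
  subst hDt
  refine ⟨?_, ?_, ?_⟩
  · intro α β
    funext n
    simp only [hDadd, add_smul]
    abel
  · intro a α
    funext n
    simp only [hDlin, smul_assoc, smul_add]
  · intro α β
    funext n
    have hs : {p : Γ × Γ | p.1 * p.2 = n}.Finite := hfin n
    set s : Finset (Γ × Γ) := hs.toFinset with hsdef
    have hmem : ∀ p : Γ × Γ, p ∈ s ↔ p.1 * p.2 = n := by
      intro p; simp [hsdef, Set.Finite.mem_toFinset]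
    have hconv : dconv α β n = ∑ p ∈ s, α p.1 * β p.2 := by
      rw [dconv, finsum_mem_eq_finite_toFinset_sum _ hs]
    have hsm1 : dsmul α (fun m => D (β m) + β m • δ m) n
        = ∑ p ∈ s, α p.1 • (D (β p.2) + β p.2 • δ p.2) := by
      delta dsmul
      rw [finsum_mem_eq_finite_toFinset_sum _ hs]
    have hsm2 : dsmul β (fun m => D (α m) + α m • δ m) n
        = ∑ p ∈ s, β p.1 • (D (α p.2) + α p.2 • δ p.2) := by
      delta dsmul
      rw [finsum_mem_eq_finite_toFinset_sum _ hs]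
    have hswap : ∑ p ∈ s, β p.1 • (D (α p.2) + α p.2 • δ p.2)
        = ∑ p ∈ s, β p.2 • (D (α p.1) + α p.1 • δ p.1) := by
      refine Finset.sum_nbij' (fun p => p.swap) (fun p => p.swap) ?_ ?_ ?_ ?_ ?_
      · intro p hp; rw [hmem] at hp ⊢; rw [← hp]; exact mul_comm _ _
      · intro p hp; rw [hmem] at hp ⊢; rw [← hp]; exact mul_comm _ _
      · intro p _; rfl
      · intro p _; rfl
      · intro p _; rfl
    have hD0 : D 0 = 0 := by
      have := hDadd 0 0; simpa using this.symm
    have Dh : ∀ (t : Finset (Γ × Γ)) (g : Γ × Γ → R),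
        D (∑ p ∈ t, g p) = ∑ p ∈ t, D (g p) := by
      intro t g
      exact map_sum (AddMonoidHom.mk' D hDadd) g t
    simp only [hconv, hsm1, hsm2, hswap]
    rw [Dh, Finset.sum_smul, ← Finset.sum_add_distrib, ← Finset.sum_add_distrib]
    refine Finset.sum_congr rfl ?_
    intro p hp
    rw [hmem] at hp
    rw [← hp, hDleib, hδmul, smul_add, smul_add, smul_add, mul_smul,
      mul_comm (α p.1) (β p.2), mul_smul]
    simp only [smul_smul, mul_comm (β p.2) (α p.1)]
    abel
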